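/- Let d be a prime number, n ≥ 1 an integer, and m an integer with 1 ≤ m ≤ d−1, and define Ω : Matrix (Fin d) (Fin d) ℂ by Ω i j = Σ_{v : Fin n → Fin d} ω^{m·i·j·∏_l v(l)} (all factors read as integers in {0,…,d−1}). Then Ω has rank exactly 2; equivalently, the residual two-qudit state obtained from the N-uniform qudit hypergraph state (N = n + 2) by projecting the last n qudits onto |+⟩ has Schmidt rank 2, so its entanglement is equivalent to that of a two-qubit entangled state. -/

import Mathlib

open Finset

noncomputable section

/-- The primitive `d`-th root of unity `ω = exp(2πi/d)`. -/
def omega (d : ℕ) : ℂ := Complex.exp (2 * Real.pi * Complex.I / d)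

lemma omega_geom (d : ℕ) (hd : d.Prime) {k : ℕ} (hk : ¬ d ∣ k) :
    ∑ a : Fin d, omega d ^ (k * (a : ℕ)) = 0 := by
  have hω : IsPrimitiveRoot (omega d) d := Complex.isPrimitiveRoot_exp d hd.ne_zero
  have hζ1 : omega d ^ k ≠ 1 := fun h => hk ((hω.pow_eq_one_iff_dvd k).mp h)
  have : ∑ a : Fin d, omega d ^ (k * (a : ℕ)) = ∑ i ∈ Finset.range d, (omega d ^ k) ^ i := by
    rw [Fin.sum_univ_eq_sum_range (fun i => omega d ^ (k * i))]
    exact Finset.sum_congr rfl fun i _ => by rw [pow_mul]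
  rw [this, geom_sum_eq hζ1]
  have : (omega d ^ k) ^ d = 1 := by
    rw [← pow_mul, mul_comm, pow_mul, hω.pow_eq_one, one_pow]
  rw [this, sub_self, zero_div]

lemma key_sum (d : ℕ) (hd : d.Prime) :
    ∀ n, 1 ≤ n → ∀ k, ¬ d ∣ k →
      ∑ v : Fin n → Fin d, omega d ^ (k * ∏ l, (v l : ℕ)) =
        (d : ℂ) ^ n - d * ((d : ℂ) - 1) ^ (n - 1) := by
  haveI : NeZero d := ⟨hd.ne_zero⟩
  intro n hn
  induction n, hn using Nat.le_induction with
  | base =>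
    intro k hk
    have h1 : ∑ v : Fin 1 → Fin d, omega d ^ (k * ∏ l, (v l : ℕ))
        = ∑ a : Fin d, omega d ^ (k * (a : ℕ)) := by
      apply Fintype.sum_equiv (Equiv.funUnique (Fin 1) (Fin d))
      intro v
      simp [Equiv.funUnique]
    rw [h1, omega_geom d hd hk]
    simp
  | succ n hn IH =>
    intro k hk
    have h1 : ∑ v : Fin (n+1) → Fin d, omega d ^ (k * ∏ l, (v l : ℕ))
        = ∑ p : Fin d × (Fin n → Fin d),
            omega d ^ (k * ((p.1 : ℕ) * ∏ l, (p.2 l : ℕ))) := by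
      refine (Fintype.sum_equiv (Fin.consEquiv fun _ => Fin d) _ _ ?_).symm
      intro p
      congr 2
      rw [Fin.prod_univ_succ]
      simp [Fin.consEquiv]
    rw [h1, Fintype.sum_prod_type]
    rw [← Finset.add_sum_erase _ _ (Finset.mem_univ (0 : Fin d))]
    have h0 : ∑ v : Fin n → Fin d, omega d ^ (k * (((0 : Fin d) : ℕ) * ∏ l, (v l : ℕ)))
        = (d : ℂ) ^ n := by
      simp [Finset.card_univ]
    have hrest : ∀ a ∈ Finset.univ.erase (0 : Fin d),
        ∑ v : Fin n → Fin d, omega d ^ (k * ((a : ℕ) * ∏ l, (v l : ℕ)))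
          = (d : ℂ) ^ n - d * ((d : ℂ) - 1) ^ (n - 1) := by
      intro a ha
      have ha0 : (a : ℕ) ≠ 0 := by
        intro h; exact Finset.ne_of_mem_erase ha (Fin.ext (by rw [h]; simp))
      have hka : ¬ d ∣ k * (a : ℕ) := by
        intro h
        rcases (Nat.Prime.dvd_mul hd).mp h with h | h
        · exact hk h
        · exact absurd (Nat.le_of_dvd (Nat.pos_of_ne_zero ha0) h) (not_le.mpr a.isLt)
      have := IH (k * (a : ℕ)) hka
      rw [← this]
      exact Finset.sum_congr rfl fun v _ => by ring_nf
    rw [Finset.sum_congr rfl hrest, h0, Finset.sum_const, Finset.card_erase_of_mem (Finset.mem_univ _),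
      Finset.card_univ, Fintype.card_fin]
    obtain ⟨e, rfl⟩ : ∃ e, n = e + 1 := ⟨n - 1, (Nat.succ_pred_eq_of_pos hn).symm⟩
    have hd2 : 2 ≤ d := hd.two_le
    have hcast : ((d - 1 : ℕ) : ℂ) = (d : ℂ) - 1 := by
      push_cast [Nat.cast_sub (le_trans one_le_two hd2)]; ring
    rw [nsmul_eq_mul, hcast]
    simp only [Nat.add_sub_cancel]
    ring

/-- For `d` prime, `n ≥ 1` and `1 ≤ m ≤ d − 1`, the amplitude
matrix `Ω i j = Σ_{v : Fin n → Fin d} ω^{m·i·j·∏ₗ v l}` of the residual two-qudit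
state (obtained from the `N`-uniform qudit hypergraph state, `N = n + 2`, by
projecting the last `n` qudits onto `|+⟩`) has rank exactly 2: the residual state
has Schmidt rank 2, so its entanglement is equivalent to two-qubit entanglement. -/
theorem residual_matrix_rank_eq_two (d n m : ℕ) (hd : d.Prime) (hn : 1 ≤ n)
    (hm1 : 1 ≤ m) (hm2 : m ≤ d - 1)
    (Ω : Matrix (Fin d) (Fin d) ℂ)
    (hΩ : ∀ i j : Fin d,
      Ω i j = ∑ v : Fin n → Fin d,
        omega d ^ (m * (i : ℕ) * (j : ℕ) * ∏ l, (v l : ℕ))) :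
    Ω.rank = 2 := by
  haveI : NeZero d := ⟨hd.ne_zero⟩
  have hd2 : 2 ≤ d := hd.two_le
  set a : ℂ := (d : ℂ) ^ n with ha
  set b : ℂ := (d : ℂ) ^ n - d * ((d : ℂ) - 1) ^ (n - 1) with hb
  -- the entries
  have hval : ∀ i j : Fin d, Ω i j = if (i : ℕ) = 0 ∨ (j : ℕ) = 0 then a else b := by
    intro i j
    rw [hΩ]
    by_cases h : (i : ℕ) = 0 ∨ (j : ℕ) = 0
    · rw [if_pos h]
      have : ∀ v : Fin n → Fin d,
          omega d ^ (m * (i : ℕ) * (j : ℕ) * ∏ l, (v l : ℕ)) = 1 := by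
        intro v
        rcases h with h | h <;> simp [h]
      rw [Finset.sum_congr rfl fun v _ => this v]
      simp [Finset.card_univ]
      exact ha.symm
    · rw [if_neg h]
      push_neg at h
      have hk : ¬ d ∣ m * (i : ℕ) * (j : ℕ) := by
        intro hdvd
        have hmd : ¬ d ∣ m := fun hdm =>
          absurd (Nat.le_of_dvd (Nat.pos_of_ne_zero (by omega)) hdm)
            (by omega)
        rcases (Nat.Prime.dvd_mul hd).mp hdvd with h' | h'
        · rcases (Nat.Prime.dvd_mul hd).mp h' with h'' | h''
          · exact hmd h''
          · exact absurd (Nat.le_of_dvd (Nat.pos_of_ne_zero h.1) h'') (not_le.mpr i.isLt)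
        · exact absurd (Nat.le_of_dvd (Nat.pos_of_ne_zero h.2) h') (not_le.mpr j.isLt)
      exact key_sum d hd n hn _ hk
  -- rows
  set ra : Fin d → ℂ := fun _ => a with hra
  set rb : Fin d → ℂ := fun j => if (j : ℕ) = 0 then a else b with hrb
  have h1v : ((1 : Fin d) : ℕ) = 1 := by rw [Fin.val_one']; exact Nat.mod_eq_of_lt hd2
  have hne1 : d ≠ 1 := by omega
  have hrow : ∀ i : Fin d, Ω i = if (i : ℕ) = 0 then ra else rb := by
    intro i
    funext j
    by_cases h : (i : ℕ) = 0
    · simp [h, hval i j, hra]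
    · simp only [h, if_false, hrb]
      rw [hval i j]
      by_cases h' : (j : ℕ) = 0 <;> simp [h, h']
  have hrange : Set.range Ω = Set.range ![ra, rb] := by
    ext x
    constructor
    · rintro ⟨i, rfl⟩
      rw [hrow i]
      by_cases h : (i : ℕ) = 0
      · exact ⟨0, by simp [h]⟩
      · exact ⟨1, by simp [h, hne1]⟩
    · rintro ⟨i, rfl⟩
      fin_cases i
      · exact ⟨0, by rw [hrow 0]; simp⟩
      · exact ⟨1, by rw [hrow 1]; simp [h1v, hne1]⟩
  -- nonzero facts
  have hdC : (d : ℂ) ≠ 0 := Nat.cast_ne_zero.mpr hd.ne_zero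
  have hd1C : (d : ℂ) - 1 ≠ 0 := by
    intro h
    have : (d : ℂ) = 1 := by linear_combination h
    have : d = 1 := by exact_mod_cast this
    omega
  have haz : a ≠ 0 := pow_ne_zero _ hdC
  have hab : a - b ≠ 0 := by
    rw [ha, hb]
    have : (d : ℂ) ^ n - ((d : ℂ) ^ n - d * ((d : ℂ) - 1) ^ (n - 1))
        = d * ((d : ℂ) - 1) ^ (n - 1) := by ring
    rw [this]
    exact mul_ne_zero hdC (pow_ne_zero _ hd1C)
  have hLI : LinearIndependent ℂ ![ra, rb] := by
    rw [LinearIndependent.pair_iff]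
    intro s t h
    have h0 := congrFun h 0
    have h1 := congrFun h 1
    simp [hra, hrb, h1v, hne1] at h0 h1
    have ht : t * (a - b) = 0 := by linear_combination h0 - h1
    have ht0 : t = 0 := by
      rcases mul_eq_zero.mp ht with h' | h'
      · exact h'
      · exact absurd h' hab
    subst ht0
    have hs : s * a = 0 := by linear_combination h0
    rcases mul_eq_zero.mp hs with h' | h'
    · exact ⟨h', rfl⟩
    · exact absurd h' haz
  rw [Matrix.rank_eq_finrank_span_row, show Set.range Ω.row = Set.range Ω from rfl, hrange, finrank_span_eq_card hLI,
    Fintype.card_fin]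
end
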